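/- For every k ≥ 2 and n₁,…,n_k ∈ ℕ, τ(gcd(n₁,…,n_k)) = ζ(k) Σ_{q₁,…,q_k ≥ 1} c_{q₁}(n₁)⋯c_{q_k}(n_k) / Q^k, with absolute convergence, where Q = lcm(q₁,…,q_k). -/

import Mathlib

open Complex Finset

noncomputable section

/-- Number of distinct prime factors. -/
def omega (n : ℕ) : ℕ := n.primeFactors.card

/-- The unitary gcd `(k,q)_* = max {d : d ∣ k, d ∣∣ q}`. -/
def ugcd (k q : ℕ) : ℕ :=
  ((q.divisors).filter (fun d => d ∣ k ∧ Nat.Coprime d (q / d))).sup id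

/-- The set of unitary divisors of `q`. -/
def unitaryDivisors (q : ℕ) : Finset ℕ :=
  q.divisors.filter (fun d => Nat.Coprime d (q / d))

/-- The unitary Ramanujan sum `c*_q(n)`. -/
def cstar (q n : ℕ) : ℂ :=
  ∑ k ∈ Finset.Icc 1 q,
    if ugcd k q = 1 then Complex.exp (2 * Real.pi * Complex.I * k * n / q) else 0

/-- The classical Ramanujan sum `c_q(n)`. -/
def cc (q n : ℕ) : ℂ :=
  ∑ k ∈ Finset.Icc 1 q,
    if Nat.gcd k q = 1 then Complex.exp (2 * Real.pi * Complex.I * k * n / q) else 0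

open ArithmeticFunction

lemma cc_eq_range (q n : ℕ) :
    cc q n = ∑ a ∈ Finset.range q,
      if Nat.gcd a q = 1 then Complex.exp (2 * Real.pi * Complex.I * a * n / q) else 0 := by
  rcases Nat.eq_zero_or_pos q with rfl | hq
  · simp [cc]
  rcases eq_or_lt_of_le (show 1 ≤ q from hq) with hq1 | hq2
  · -- q = 1
    rw [cc, ← hq1]
    norm_num
    rw [show ((2:ℂ) * Real.pi * I * n) = (n:ℤ) * (2 * Real.pi * I) by push_cast; ring]
    exact Complex.exp_int_mul_two_pi_mul_I n
  · -- q ≥ 2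
    rw [cc, ← Finset.sum_filter, ← Finset.sum_filter]
    apply Finset.sum_congr _ (fun x _ => rfl)
    ext a
    simp only [mem_filter, mem_Icc, mem_range]
    constructor
    · rintro ⟨⟨h1, h2⟩, h3⟩
      refine ⟨lt_of_le_of_ne h2 ?_, h3⟩
      rintro rfl
      rw [Nat.gcd_self] at h3; omega
    · rintro ⟨h1, h3⟩
      refine ⟨⟨?_, le_of_lt h1⟩, h3⟩
      rcases Nat.eq_zero_or_pos a with rfl | ha
      · rw [Nat.gcd_zero_left] at h3; omega
      · exact ha

lemma geo_sum (m : ℕ) (hm : 0 < m) (n : ℕ) :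
    ∑ j ∈ Finset.range m, Complex.exp (2 * Real.pi * Complex.I * j * n / m)
      = if m ∣ n then (m : ℂ) else 0 := by
  have hm0 : (m : ℂ) ≠ 0 := Nat.cast_ne_zero.mpr hm.ne'
  have h2pi : ((2:ℂ) * Real.pi * Complex.I) ≠ 0 := by
    simp [Real.pi_ne_zero, Complex.I_ne_zero]
  have hterm : ∀ j : ℕ, Complex.exp (2 * Real.pi * Complex.I * j * n / m)
      = Complex.exp (2 * Real.pi * Complex.I * n / m) ^ j := by
    intro j
    rw [← Complex.exp_nat_mul]
    congr 1
    field_simp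
  simp only [hterm]
  by_cases h : m ∣ n
  · obtain ⟨c, rfl⟩ := h
    have : Complex.exp (2 * Real.pi * Complex.I * (↑(m * c) : ℂ) / m) = 1 := by
      rw [show (2 * Real.pi * Complex.I * (↑(m * c) : ℂ) / m) = (c:ℤ) * (2 * Real.pi * I) by
        push_cast; field_simp]
      exact Complex.exp_int_mul_two_pi_mul_I c
    push_cast at this ⊢
    simp [this]
  · rw [if_neg h]
    have hx : Complex.exp (2 * Real.pi * Complex.I * n / m) ≠ 1 := by
      intro hx
      rw [Complex.exp_eq_one_iff] at hx
      obtain ⟨t, ht⟩ := hx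
      apply h
      have ht2 := ht
      field_simp at ht2
      have h5 : (2 * Real.pi * Complex.I) * (n:ℂ) = (2 * Real.pi * Complex.I) * ((t:ℂ) * m) := by
        linear_combination (2 * Real.pi * Complex.I) * ht2
      have h3 : (n : ℂ) = (t:ℂ) * m := mul_left_cancel₀ h2pi h5
      have h6 : (n : ℤ) = t * m := by exact_mod_cast h3
      have : (m : ℤ) ∣ (n : ℤ) := ⟨t, by rw [h6, mul_comm]⟩
      exact_mod_cast this
    have hxm : Complex.exp (2 * Real.pi * Complex.I * n / m) ^ m = 1 := by
      rw [← Complex.exp_nat_mul,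
        show ((m:ℂ) * (2 * Real.pi * Complex.I * n / m)) = (n:ℤ) * (2 * Real.pi * I) by
          push_cast; field_simp]
      exact Complex.exp_int_mul_two_pi_mul_I n
    rw [geom_sum_eq hx, hxm, sub_self, zero_div]

lemma sum_cc_divisors (m : ℕ) (hm : 0 < m) (n : ℕ) :
    ∑ d ∈ m.divisors, cc d n = if m ∣ n then (m : ℂ) else 0 := by
  rw [← geo_sum m hm n]
  rw [← Nat.sum_div_divisors m (fun d => cc d n)]
  conv_rhs => rw [← Finset.sum_fiberwise_of_maps_to (g := fun j => Nat.gcd m j) (t := m.divisors)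
    (fun j _ => Nat.mem_divisors.mpr ⟨Nat.gcd_dvd_left m j, hm.ne'⟩)]
  apply Finset.sum_congr rfl
  intro g hg
  obtain ⟨hgdvd, -⟩ := Nat.mem_divisors.mp hg
  have hgpos : 0 < g := Nat.pos_of_mem_divisors hg
  set d := m / g with hd
  have hdg : d * g = m := Nat.div_mul_cancel hgdvd
  have hdpos : 0 < d := Nat.div_pos (Nat.le_of_dvd hm hgdvd) hgpos
  rw [cc_eq_range, ← Finset.sum_filter]
  apply Finset.sum_nbij' (i := fun a => g * a) (j := fun j => j / g)
  · intro a ha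
    simp only [mem_filter, mem_range] at ha ⊢
    constructor
    · calc g * a < g * d := by exact (Nat.mul_lt_mul_left hgpos).mpr ha.1
        _ = m := by rw [mul_comm]; exact hdg
    · rw [mul_comm g a, ← hdg, Nat.gcd_mul_right, Nat.gcd_comm d a, ha.2, one_mul]
  · intro j hj
    simp only [mem_filter, mem_range] at hj ⊢
    obtain ⟨hjm, hgcd⟩ := hj
    have hgj : g ∣ j := hgcd ▸ Nat.gcd_dvd_right m j
    constructor
    · apply Nat.div_lt_of_lt_mul
      rw [mul_comm d g] at hdg
      omega
    · have : g * Nat.gcd d (j / g) = g := by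
        rw [← Nat.gcd_mul_left, Nat.mul_div_cancel' hgj, mul_comm g d, hdg]
        exact hgcd
      have := Nat.eq_of_mul_eq_mul_left hgpos (this.trans (mul_one g).symm)
      rw [Nat.gcd_comm] at this
      exact this
  · intro a ha
    exact Nat.mul_div_cancel_left a hgpos
  · intro j hj
    simp only [mem_filter, mem_range] at hj
    have hgj : g ∣ j := hj.2 ▸ Nat.gcd_dvd_right m j
    exact Nat.mul_div_cancel' hgj
  · intro a ha
    simp only [mem_filter, mem_range] at ha
    congr 1
    have hgC : (g:ℂ) ≠ 0 := Nat.cast_ne_zero.mpr hgpos.ne'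
    have hdC : (d:ℂ) ≠ 0 := Nat.cast_ne_zero.mpr hdpos.ne'
    have : (m : ℂ) = d * g := by exact_mod_cast hdg.symm
    rw [this]
    push_cast
    field_simp

lemma cc_moebius (q : ℕ) (hq : 0 < q) (n : ℕ) :
    cc q n = ∑ d ∈ q.divisors, (moebius (q / d) : ℂ) * (if d ∣ n then (d : ℂ) else 0) := by
  have := (ArithmeticFunction.sum_eq_iff_sum_mul_moebius_eq
    (f := fun d => cc d n) (g := fun m => if m ∣ n then (m : ℂ) else 0)).mp
    (fun m hm => sum_cc_divisors m hm n) q hq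
  rw [← this, ← Nat.sum_divisorsAntidiagonal' (f := fun a b => (moebius a : ℂ) * (if b ∣ n then (b:ℂ) else 0))]

lemma cc_norm_le (q : ℕ) (hq : 0 < q) (n : ℕ) (hn : 0 < n) :
    ‖cc q n‖ ≤ ∑ d ∈ n.divisors, (d : ℝ) := by
  rw [cc_moebius q hq n]
  refine (norm_sum_le _ _).trans ?_
  have step1 : ∀ d ∈ q.divisors,
      ‖(moebius (q / d) : ℂ) * (if d ∣ n then (d : ℂ) else 0)‖
        ≤ (if d ∣ n then (d : ℝ) else 0) := by
    intro d hd
    rw [norm_mul]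
    have h1 : ‖((moebius (q / d) : ℤ) : ℂ)‖ ≤ 1 := by
      rw [Complex.norm_intCast]
      exact_mod_cast ArithmeticFunction.abs_moebius_le_one
    have h2 : ‖(if d ∣ n then (d : ℂ) else 0)‖ = (if d ∣ n then (d:ℝ) else 0) := by
      split <;> simp
    calc ‖((moebius (q/d) : ℤ) : ℂ)‖ * ‖(if d ∣ n then (d : ℂ) else 0)‖
        ≤ 1 * (if d ∣ n then (d:ℝ) else 0) := by
          rw [h2]; apply mul_le_mul_of_nonneg_right h1; positivity
      _ = _ := one_mul _
  refine (Finset.sum_le_sum step1).trans ?_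
  rw [← Finset.sum_filter]
  apply Finset.sum_le_sum_of_subset_of_nonneg
  · intro d hd
    simp only [mem_filter, Nat.mem_divisors] at hd ⊢
    exact ⟨hd.2, hn.ne'⟩
  · intro d _ _
    positivity

lemma pow3_le_aux (a : ℕ) : (a + 1) ^ 3 ≤ 8 * 2 ^ a := by
  induction a with
  | zero => norm_num
  | succ b ih =>
    rcases Nat.lt_or_ge b 3 with hb | hb
    · interval_cases b <;> norm_num
    · have e1 : 3 * b ^ 2 ≤ b ^ 3 := by
        calc 3 * b ^ 2 ≤ b * b ^ 2 := Nat.mul_le_mul_right _ hb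
          _ = b ^ 3 := by ring
      have e2 : 3 * b ≤ b ^ 2 := by
        calc 3 * b ≤ b * b := Nat.mul_le_mul_right _ hb
          _ = b ^ 2 := by ring
      have h1 : (b + 2) ^ 3 ≤ 2 * (b + 1) ^ 3 := by nlinarith [e1, e2, hb]
      calc (b + 1 + 1) ^ 3 = (b + 2) ^ 3 := by ring_nf
        _ ≤ 2 * (b + 1) ^ 3 := h1
        _ ≤ 2 * (8 * 2 ^ b) := by omega
        _ = 8 * 2 ^ (b + 1) := by ring

lemma pow3_le_aux2 (p a : ℕ) (hp : 8 ≤ p) (ha : 1 ≤ a) : (a + 1) ^ 3 ≤ p ^ a := by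
  induction a with
  | zero => omega
  | succ b ih =>
    rcases Nat.eq_zero_or_pos b with rfl | hb
    · simpa using hp
    · calc (b + 1 + 1) ^ 3 ≤ 8 * (b + 1) ^ 3 := by nlinarith [sq_nonneg b, hb]
        _ ≤ p * p ^ b := Nat.mul_le_mul hp (ih hb)
        _ = p ^ (b + 1) := by ring

lemma tau_cubed_le (m : ℕ) (hm : 0 < m) : (m.divisors.card) ^ 3 ≤ 8 ^ 8 * m := by
  rw [Nat.card_divisors hm.ne']
  conv_rhs => rw [← Nat.factorization_prod_pow_eq_self hm.ne']
  rw [Nat.prod_factorization_eq_prod_primeFactors]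
  rw [← Finset.prod_pow]
  have key : ∀ p ∈ m.primeFactors,
      (m.factorization p + 1) ^ 3 ≤ (if p ≤ 7 then 8 else 1) * p ^ (m.factorization p) := by
    intro p hp
    have hpp : p.Prime := Nat.prime_of_mem_primeFactors hp
    have ha : 1 ≤ m.factorization p := by
      rw [← Nat.Prime.dvd_iff_one_le_factorization hpp hm.ne']
      exact Nat.dvd_of_mem_primeFactors hp
    split
    · calc (m.factorization p + 1) ^ 3 ≤ 8 * 2 ^ (m.factorization p) := pow3_le_aux _
        _ ≤ 8 * p ^ (m.factorization p) :=
          Nat.mul_le_mul_left 8 (Nat.pow_le_pow_left hpp.two_le _)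
    · rw [one_mul]
      exact pow3_le_aux2 p _ (by omega) ha
  calc ∏ p ∈ m.primeFactors, (m.factorization p + 1) ^ 3
      ≤ ∏ p ∈ m.primeFactors, (if p ≤ 7 then 8 else 1) * p ^ (m.factorization p) :=
        Finset.prod_le_prod' key
    _ = (∏ p ∈ m.primeFactors, (if p ≤ 7 then 8 else 1))
        * ∏ p ∈ m.primeFactors, p ^ (m.factorization p) := Finset.prod_mul_distrib
    _ ≤ 8 ^ 8 * ∏ p ∈ m.primeFactors, p ^ (m.factorization p) := by
        apply Nat.mul_le_mul_right
        calc (∏ p ∈ m.primeFactors, (if p ≤ 7 then 8 else 1))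
            = (∏ p ∈ m.primeFactors.filter (· ≤ 7), (if p ≤ 7 then 8 else 1))
              * ∏ p ∈ m.primeFactors.filter (fun p => ¬ (p ≤ 7)), (if p ≤ 7 then 8 else 1) :=
              (Finset.prod_filter_mul_prod_filter_not _ _ _).symm
          _ ≤ 8 ^ 8 := by
              rw [Finset.prod_ite_of_true (by intro p hp; exact (Finset.mem_filter.mp hp).2),
                Finset.prod_ite_of_false (by intro p hp; exact (Finset.mem_filter.mp hp).2)]
              rw [Finset.prod_const, Finset.prod_const, one_pow, mul_one]
              apply Nat.pow_le_pow_right (by norm_num)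
              calc (m.primeFactors.filter (· ≤ 7)).card ≤ (Finset.range 8).card := by
                    apply Finset.card_le_card
                    intro p hp
                    simp only [Finset.mem_filter] at hp
                    exact Finset.mem_range.mpr (by omega)
                _ = 8 := Finset.card_range 8

lemma summable_tau_pow (k : ℕ) (hk : 2 ≤ k) :
    Summable (fun m : ℕ+ => ((m:ℕ).divisors.card : ℝ) ^ k / ((m:ℕ) : ℝ) ^ k) := by
  set K : ℝ := ((8:ℝ) ^ 8) ^ 2 with hK
  have hg : Summable (fun m : ℕ+ => K ^ ((1:ℝ)/3) / ((m:ℕ) : ℝ) ^ ((4:ℝ)/3)) := by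
    have h1 : Summable (fun n : ℕ => 1 / (n : ℝ) ^ ((4:ℝ)/3)) :=
      Real.summable_one_div_nat_rpow.mpr (by norm_num)
    have h2 := (h1.comp_injective (i := fun m : ℕ+ => (m : ℕ))
      (fun a b h => PNat.coe_injective h))
    simpa [div_eq_mul_inv, mul_comm, mul_assoc] using h2.mul_left (K ^ ((1:ℝ)/3))
  apply Summable.of_nonneg_of_le (fun m => by positivity) _ hg
  intro m
  have hmpos : 0 < (m : ℕ) := m.pos
  have hmR : (1:ℝ) ≤ ((m:ℕ) : ℝ) := by exact_mod_cast hmpos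
  set t : ℝ := ((m:ℕ).divisors.card : ℝ) with ht
  have htpos : 0 ≤ t := by positivity
  have htm : t ≤ ((m:ℕ) : ℝ) := by
    rw [ht]
    have : (m:ℕ).divisors.card ≤ (m:ℕ) := by
      calc (m:ℕ).divisors.card ≤ (Finset.Icc 1 (m:ℕ)).card := by
            apply Finset.card_le_card
            intro d hd
            rw [Finset.mem_Icc]
            exact ⟨Nat.pos_of_mem_divisors hd, Nat.le_of_dvd hmpos (Nat.dvd_of_mem_divisors hd)⟩
        _ = (m:ℕ) := by rw [Nat.card_Icc]; omega
    exact_mod_cast this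
  have hfrac : t / ((m:ℕ):ℝ) ≤ 1 := div_le_one_of_le₀ htm (by positivity)
  have step1 : t ^ k / ((m:ℕ):ℝ) ^ k ≤ t ^ 2 / ((m:ℕ):ℝ) ^ 2 := by
    rw [← div_pow, ← div_pow]
    exact pow_le_pow_of_le_one (by positivity) hfrac hk
  have cube : (t ^ 2 / ((m:ℕ):ℝ) ^ 2) ^ (3:ℕ) ≤ K / ((m:ℕ):ℝ) ^ (4:ℕ) := by
    have h3 : t ^ 3 ≤ 8 ^ 8 * ((m:ℕ):ℝ) := by
      have := tau_cubed_le (m:ℕ) hmpos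
      rw [ht]
      push_cast
      exact_mod_cast this
    have h4 : (t ^ 3) ^ 2 ≤ (8 ^ 8 * ((m:ℕ):ℝ)) ^ 2 := by
      apply pow_le_pow_left₀ (by positivity) h3
    rw [div_pow, div_le_div_iff₀ (by positivity) (by positivity)]
    calc (t ^ 2) ^ 3 * ((m:ℕ):ℝ) ^ 4 = (t ^ 3) ^ 2 * ((m:ℕ):ℝ) ^ 4 := by ring
      _ ≤ (8 ^ 8 * ((m:ℕ):ℝ)) ^ 2 * ((m:ℕ):ℝ) ^ 4 := by
          apply mul_le_mul_of_nonneg_right h4 (by positivity)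
      _ = K * ((m:ℕ):ℝ) ^ 2 * ((m:ℕ):ℝ) ^ 4 := by rw [hK]; ring
      _ = K * (((m:ℕ):ℝ) ^ 2) ^ 3 := by ring
  have step2 : t ^ 2 / ((m:ℕ):ℝ) ^ 2 ≤ K ^ ((1:ℝ)/3) / ((m:ℕ):ℝ) ^ ((4:ℝ)/3) := by
    have hbase : (0:ℝ) ≤ t ^ 2 / ((m:ℕ):ℝ) ^ 2 := by positivity
    have := Real.rpow_le_rpow (by positivity) cube (by norm_num : (0:ℝ) ≤ 1/3)
    rw [← Real.rpow_natCast (t ^ 2 / ((m:ℕ):ℝ) ^ 2) 3, ← Real.rpow_mul hbase] at this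
    norm_num at this
    calc t ^ 2 / ((m:ℕ):ℝ) ^ 2 = (t ^ 2 / ((m:ℕ):ℝ) ^ 2) ^ (1:ℝ) := by
          rw [Real.rpow_one]
      _ ≤ (K / ((m:ℕ):ℝ) ^ (4:ℕ)) ^ ((1:ℝ)/3) := by
          norm_num
          exact this
      _ = K ^ ((1:ℝ)/3) / ((m:ℕ):ℝ) ^ ((4:ℝ)/3) := by
          rw [Real.div_rpow (by positivity) (by positivity)]
          congr 1
          rw [← Real.rpow_natCast ((m:ℕ):ℝ) 4, ← Real.rpow_mul (by positivity)]
          norm_num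
  exact step1.trans step2

/-- divisors of a positive natural, as a finset of `ℕ+`. -/
def pdivisors (m : ℕ+) : Finset ℕ+ :=
  (m:ℕ).divisors.attach.image (fun d => Nat.toPNat d.1 (Nat.pos_of_mem_divisors d.2))

lemma mem_pdiv {m : ℕ+} {x : ℕ+} : x ∈ pdivisors m ↔ (x:ℕ) ∣ (m:ℕ) := by
  unfold pdivisors
  simp only [Finset.mem_image, Finset.mem_attach, true_and, Subtype.exists]
  constructor
  · rintro ⟨d, hd, rfl⟩
    exact Nat.dvd_of_mem_divisors hd
  · intro hx
    exact ⟨(x:ℕ), Nat.mem_divisors.mpr ⟨hx, (m.pos).ne'⟩, rfl⟩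

lemma sum_pdiv {M : Type*} [AddCommMonoid M] (m : ℕ+) (F : ℕ → M) :
    ∑ d ∈ pdivisors m, F (d : ℕ) = ∑ d ∈ (m:ℕ).divisors, F d := by
  unfold pdivisors
  rw [Finset.sum_image (by intro a _ b _ h; exact Subtype.ext (congrArg PNat.val h))]
  exact Finset.sum_attach _ _

lemma card_pdiv (m : ℕ+) : (pdivisors m).card = (m:ℕ).divisors.card := by
  unfold pdivisors
  rw [Finset.card_image_of_injective _ (by intro a b h; exact Subtype.ext (congrArg PNat.val h)),
    Finset.card_attach]

set_option maxHeartbeats 2000000 in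
theorem stmt17 (k : ℕ) (hk : 2 ≤ k) (n : Fin k → ℕ+) :
    Summable (fun q : Fin k → ℕ+ =>
      (∏ i, cc (q i) (n i)) / ((Finset.univ.lcm (fun i => ((q i : ℕ))) : ℕ) : ℂ) ^ k) ∧
    ((ArithmeticFunction.sigma 0 (Finset.univ.gcd (fun i => ((n i : ℕ)))) : ℕ) : ℂ)
      = riemannZeta k *
          ∑' q : Fin k → ℕ+,
            (∏ i, cc (q i) (n i)) / ((Finset.univ.lcm (fun i => ((q i : ℕ))) : ℕ) : ℂ) ^ k := by
  have i0 : Fin k := ⟨0, by omega⟩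
  set f : (Fin k → ℕ+) → ℂ := fun q =>
    (∏ i, cc (q i) (n i)) / ((Finset.univ.lcm (fun i => ((q i : ℕ))) : ℕ) : ℂ) ^ k with hf
  set G : ℕ+ × (Fin k → ℕ+) → ℂ := fun p =>
    if ∀ i, ((p.2 i : ℕ) ∣ (p.1 : ℕ)) then
      (∏ i, cc (p.2 i) (n i)) / ((p.1 : ℕ) : ℂ) ^ k else 0 with hG
  set C : ℝ := ∏ i, ∑ d ∈ ((n i : ℕ)).divisors, (d:ℝ) with hC
  have hCnn : 0 ≤ C := Finset.prod_nonneg (fun i _ => Finset.sum_nonneg (fun d _ => by positivity))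
  -- the finset of tuples supported on divisors of m
  set piF : ℕ+ → Finset (Fin k → ℕ+) := fun m => Fintype.piFinset (fun _ => pdivisors m) with hpiF
  have mem_piF : ∀ m (q : Fin k → ℕ+), q ∈ piF m ↔ ∀ i, ((q i : ℕ) ∣ (m : ℕ)) := by
    intro m q
    rw [hpiF, Fintype.mem_piFinset]
    exact forall_congr' (fun i => mem_pdiv)
  have hGoff : ∀ (m : ℕ+) (q : Fin k → ℕ+), q ∉ piF m → G (m, q) = 0 := by
    intro m q hq
    rw [hG]
    simp only
    rw [if_neg]
    rw [mem_piF] at hq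
    exact hq
  -- norm bound on G
  have hGbd : ∀ (m : ℕ+) (q : Fin k → ℕ+), ‖G (m, q)‖ ≤ C / ((m:ℕ):ℝ) ^ k := by
    intro m q
    rw [hG]
    simp only
    split
    · rw [norm_div, norm_pow, Complex.norm_natCast]
      apply div_le_div_of_nonneg_right ?_ (by positivity) |>.trans_eq rfl
      · rw [norm_prod]
        apply Finset.prod_le_prod (fun i _ => norm_nonneg _)
        intro i _
        exact cc_norm_le _ (q i).pos _ (n i).pos
    · simp; positivity
  -- tsum over q for fixed m of the norm of G
  have htsum_norm_le : ∀ m : ℕ+, (∑' q : Fin k → ℕ+, ‖G (m, q)‖)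
      ≤ C * (((m:ℕ).divisors.card : ℝ) ^ k / ((m:ℕ):ℝ) ^ k) := by
    intro m
    rw [tsum_eq_sum (s := piF m) (fun q hq => by rw [hGoff m q hq, norm_zero])]
    calc ∑ q ∈ piF m, ‖G (m,q)‖ ≤ ∑ _q ∈ piF m, C / ((m:ℕ):ℝ) ^ k :=
          Finset.sum_le_sum (fun q _ => hGbd m q)
      _ = (piF m).card * (C / ((m:ℕ):ℝ) ^ k) := by rw [Finset.sum_const, nsmul_eq_mul]
      _ = C * (((m:ℕ).divisors.card : ℝ) ^ k / ((m:ℕ):ℝ) ^ k) := by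
          rw [hpiF, Fintype.card_piFinset]
          simp only [card_pdiv, Finset.prod_const, Finset.card_univ, Fintype.card_fin]
          push_cast
          ring
  have hnormsum : Summable (fun p : ℕ+ × (Fin k → ℕ+) => ‖G p‖) := by
    rw [summable_prod_of_nonneg (fun p => norm_nonneg _)]
    constructor
    · intro m
      exact summable_of_ne_finset_zero (s := piF m)
        (fun q hq => by rw [hGoff m q hq, norm_zero])
    · apply Summable.of_nonneg_of_le (fun m => tsum_nonneg (fun q => norm_nonneg _)) htsum_norm_le
      exact (summable_tau_pow k hk).mul_left C
  have hGsum : Summable G := hnormsum.of_norm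
  have hslice_q : ∀ q : Fin k → ℕ+, Summable (fun m : ℕ+ => G (m, q)) := fun q =>
    hGsum.comp_injective (fun a b h => congrArg Prod.fst h)
  have hslice_m : ∀ m : ℕ+, Summable (fun q : Fin k → ℕ+ => G (m, q)) := fun m =>
    hGsum.prod_factor m
  have hGswap : Summable (fun p : (Fin k → ℕ+) × ℕ+ => G (p.2, p.1)) :=
    (Equiv.prodComm (Fin k → ℕ+) ℕ+).summable_iff.mpr hGsum
  have hsum_tsum_q : Summable (fun q : Fin k → ℕ+ => ∑' m : ℕ+, G (m, q)) :=
    (hGswap.hasSum.prod_fiberwise (fun q => (hslice_q q).hasSum)).summable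
  -- evaluation of the inner sum over m, for fixed q
  have E1 : ∀ q : Fin k → ℕ+, ∑' m : ℕ+, G (m, q) = riemannZeta k * f q := by
    intro q
    set Q : ℕ := Finset.univ.lcm (fun i => ((q i : ℕ))) with hQ
    have hQpos : 0 < Q := by
      apply Nat.pos_of_ne_zero
      intro h
      rw [hQ, Finset.lcm_eq_zero_iff] at h
      obtain ⟨i, -, hi⟩ := h
      exact (q i).pos.ne' hi
    have hcond : ∀ m : ℕ+, (∀ i, ((q i : ℕ) ∣ (m:ℕ))) ↔ Q ∣ (m:ℕ) := by
      intro m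
      rw [hQ, Finset.lcm_dvd_iff]
      simp
    have hGm : ∀ m : ℕ+, G (m, q)
        = (∏ i, cc (q i) (n i)) * (if Q ∣ (m:ℕ) then (1:ℂ)/((m:ℕ):ℂ) ^ k else 0) := by
      intro m
      rw [hG]
      simp only
      by_cases h : ∀ i, ((q i : ℕ) ∣ (m:ℕ))
      · rw [if_pos h, if_pos ((hcond m).mp h), mul_one_div]
      · rw [if_neg h, if_neg (fun hq => h ((hcond m).mpr hq)), mul_zero]
    rw [tsum_congr hGm, tsum_mul_left]
    have hZ : ∑' t : ℕ+, (1:ℂ)/((t:ℕ):ℂ) ^ k = riemannZeta k := by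
      have hre : 1 < ((k:ℂ)).re := by
        rw [Complex.natCast_re]
        exact_mod_cast lt_of_lt_of_le one_lt_two (by exact_mod_cast hk)
      rw [zeta_eq_tsum_one_div_nat_cpow hre]
      rw [← Function.Injective.tsum_eq (f := fun j : ℕ => 1/(j:ℂ) ^ (k:ℂ))
        (g := fun t : ℕ+ => (t : ℕ)) PNat.coe_injective ?_]
      · apply tsum_congr
        intro t
        rw [Complex.cpow_natCast]
      · intro j hj
        simp only [Function.mem_support] at hj
        rcases Nat.eq_zero_or_pos j with rfl | h
        · exfalso
          apply hj
          rw [Nat.cast_zero, Complex.zero_cpow (by exact_mod_cast (by omega : k ≠ 0)), div_zero]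
        · exact ⟨⟨j, h⟩, rfl⟩
    have hzeta : ∑' m : ℕ+, (if Q ∣ (m:ℕ) then (1:ℂ)/((m:ℕ):ℂ) ^ k else 0)
        = riemannZeta k / (Q:ℂ) ^ k := by
      set QQ : ℕ+ := ⟨Q, hQpos⟩ with hQQ
      have hinj : Function.Injective (fun t : ℕ+ => QQ * t) := fun a b h => by
        exact mul_left_cancel h
      have hsupp : Function.support (fun m : ℕ+ => (if Q ∣ (m:ℕ) then (1:ℂ)/((m:ℕ):ℂ) ^ k else 0))
          ⊆ Set.range (fun t : ℕ+ => QQ * t) := by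
        intro m hm
        simp only [Function.mem_support] at hm
        by_cases h : Q ∣ (m:ℕ)
        · obtain ⟨c, hc⟩ := h
          have hcpos : 0 < c := by
            rcases Nat.eq_zero_or_pos c with rfl | h'
            · exfalso; exact m.pos.ne' (by omega)
            · exact h'
          refine ⟨Nat.toPNat c hcpos, ?_⟩
          apply PNat.coe_injective
          rw [PNat.mul_coe]
          exact hc.symm
        · exact absurd (if_neg h) hm
      rw [← Function.Injective.tsum_eq hinj hsupp]
      have hterm : ∀ t : ℕ+, (if Q ∣ ((QQ * t : ℕ+):ℕ) then (1:ℂ)/(((QQ * t : ℕ+):ℕ):ℂ) ^ k else 0)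
          = (1/(Q:ℂ) ^ k) * ((1:ℂ)/((t:ℕ):ℂ) ^ k) := by
        intro t
        rw [if_pos ⟨(t:ℕ), rfl⟩]
        rw [PNat.mul_coe]
        push_cast
        rw [mul_pow, one_div_mul_one_div]
        rfl
      rw [tsum_congr hterm, tsum_mul_left, hZ]
      ring
    rw [hzeta, hf]
    simp only
    rw [← hQ]
    ring
  -- evaluation of the inner sum over q, for fixed m
  set gg : ℕ := Finset.univ.gcd (fun i => ((n i : ℕ))) with hgg
  have E2 : ∀ m : ℕ+, ∑' q : Fin k → ℕ+, G (m, q) = if (m:ℕ) ∣ gg then (1:ℂ) else 0 := by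
    intro m
    rw [tsum_eq_sum (s := piF m) (fun q hq => hGoff m q hq)]
    have hterm : ∀ q ∈ piF m, G (m,q) = (∏ i, cc (q i) (n i)) / ((m:ℕ):ℂ) ^ k := by
      intro q hq
      rw [hG]
      simp only
      rw [if_pos ((mem_piF m q).mp hq)]
    rw [Finset.sum_congr rfl hterm, ← Finset.sum_div, hpiF,
      ← Finset.prod_univ_sum (t := fun _ : Fin k => pdivisors m)
        (f := fun i (d : ℕ+) => cc (d:ℕ) ((n i : ℕ)))]
    have hin : ∀ i : Fin k, ∑ d ∈ pdivisors m, cc (d:ℕ) ((n i :ℕ))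
        = if (m:ℕ) ∣ (n i : ℕ) then ((m:ℕ):ℂ) else 0 := by
      intro i
      rw [sum_pdiv m (fun d => cc d ((n i : ℕ)))]
      exact sum_cc_divisors _ m.pos _
    rw [Finset.prod_congr rfl (fun i _ => hin i)]
    by_cases hall : ∀ i, (m:ℕ) ∣ (n i : ℕ)
    · rw [Finset.prod_congr rfl (fun i _ => if_pos (hall i)), Finset.prod_const,
        Finset.card_univ, Fintype.card_fin,
        if_pos (Finset.dvd_gcd_iff.mpr (fun i _ => hall i)),
        div_self (pow_ne_zero _ (Nat.cast_ne_zero.mpr m.pos.ne'))]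
    · push_neg at hall
      obtain ⟨i1, hi1⟩ := hall
      rw [Finset.prod_eq_zero (Finset.mem_univ i1)
          (if_neg hi1 : (if ((m:ℕ) ∣ ((n i1 : ℕ))) then ((m:ℕ):ℂ) else 0) = 0), zero_div,
        if_neg (fun hdvd => hi1 (Finset.dvd_gcd_iff.mp hdvd i1 (Finset.mem_univ i1)))]
  -- assembly
  have hre1 : 1 ≤ ((k:ℂ)).re := by
    rw [Complex.natCast_re]
    exact_mod_cast le_trans one_le_two (by exact_mod_cast hk)
  have hζ : riemannZeta k ≠ 0 := riemannZeta_ne_zero_of_one_le_re hre1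
  have hsum_f : Summable f := by
    have h := hsum_tsum_q.congr E1
    exact (summable_mul_left_iff hζ).mp h
  refine ⟨hsum_f, ?_⟩
  have hggpos : 0 < gg := by
    apply Nat.pos_of_ne_zero
    intro h
    exact (n i0).pos.ne' (Finset.gcd_eq_zero_iff.mp h i0 (Finset.mem_univ i0))
  have h6 : ∑' m : ℕ+, (if (m:ℕ) ∣ gg then (1:ℂ) else 0) = (gg.divisors.card : ℂ) := by
    have hoff : ∀ (m : ℕ+), m ∉ pdivisors (Nat.toPNat gg hggpos) → (if (m:ℕ) ∣ gg then (1:ℂ) else 0) = 0 := by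
      intro m hm
      apply if_neg
      intro hd
      exact hm (mem_pdiv.mpr hd)
    rw [tsum_eq_sum hoff]
    have hon : ∀ d ∈ pdivisors (Nat.toPNat gg hggpos), (if (d:ℕ) ∣ gg then (1:ℂ) else 0) = 1 := by
      intro d hd
      exact if_pos (mem_pdiv.mp hd)
    rw [Finset.sum_congr rfl hon, Finset.sum_const, card_pdiv]
    simp
    rfl
  calc ((ArithmeticFunction.sigma 0 gg : ℕ) : ℂ) = (gg.divisors.card : ℂ) := by
        rw [ArithmeticFunction.sigma_zero_apply]
    _ = ∑' m : ℕ+, (if (m:ℕ) ∣ gg then (1:ℂ) else 0) := h6.symm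
    _ = ∑' m : ℕ+, ∑' q : Fin k → ℕ+, G (m, q) := (tsum_congr E2).symm
    _ = ∑' p : ℕ+ × (Fin k → ℕ+), G p := (Summable.tsum_prod' hGsum hslice_m).symm
    _ = ∑' q : Fin k → ℕ+, ∑' m : ℕ+, G (m, q) := by
        rw [← Equiv.tsum_eq (Equiv.prodComm (Fin k → ℕ+) ℕ+) G]
        exact Summable.tsum_prod' hGswap (fun q => hslice_q q)
    _ = ∑' q : Fin k → ℕ+, riemannZeta k * f q := tsum_congr E1
    _ = riemannZeta k * ∑' q, f q := tsum_mul_left
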